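/- Let n ≥ 3 and let S = {p₁, …, p_m} be a finite subset of ℝⁿ. Let u be a real-valued harmonic function on ℝⁿ ∖ S. Suppose there exist s₀ > 0, a constant C > 0 and an exponent μ ∈ (0, n−2) such that |u(x)| ≤ C·|x − pᵢ|^{−μ} for every i and every x with 0 < |x − pᵢ| < s₀, and suppose moreover that u(x) → 0 as the distance from x to S tends to infinity. Then u is identically zero on ℝⁿ ∖ S. -/

import Mathlib

open Filter Topology Set RealInnerProductSpace

/-- 1-D second derivative test: at a local max, the second derivative is ≤ 0. -/
lemma secondDeriv_nonpos_of_isLocalMax {g : ℝ → ℝ}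
    (hg : ∀ᶠ t in 𝓝 (0:ℝ), DifferentiableAt ℝ g t)
    (hg' : DifferentiableAt ℝ (deriv g) 0)
    (hmax : IsLocalMax g 0) : deriv (deriv g) 0 ≤ 0 := by
  by_contra hpos
  push_neg at hpos
  have h0 : deriv g 0 = 0 := hmax.deriv_eq_zero
  have hs := hasDerivAt_iff_tendsto_slope.1 hg'.hasDerivAt
  have hev : ∀ᶠ t in 𝓝[≠] (0:ℝ), 0 < slope (deriv g) 0 t :=
    hs (Ioi_mem_nhds hpos)
  have hev' : ∀ᶠ t in 𝓝[>] (0:ℝ), 0 < deriv g t := by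
    have hle : 𝓝[>] (0:ℝ) ≤ 𝓝[≠] (0:ℝ) :=
      nhdsWithin_mono _ fun t ht => ne_of_gt ht
    filter_upwards [hle hev, self_mem_nhdsWithin] with t ht ht'
    have hslope : slope (deriv g) 0 t = deriv g t / t := by
      simp [slope_def_field, h0]
    rw [hslope] at ht
    have := mul_pos ht (ht' : (0:ℝ) < t)
    rwa [div_mul_cancel₀ _ (ne_of_gt ht')] at this
  obtain ⟨δ1, hδ1, hdiff⟩ := Metric.eventually_nhds_iff.1 hg
  obtain ⟨u, hu, hder⟩ := mem_nhdsGT_iff_exists_Ioo_subset.1 hev'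
  obtain ⟨δ3, hδ3, hmax'⟩ := Metric.eventually_nhds_iff.1 hmax
  set ε := min (min δ1 δ3) u / 2 with hεdef
  have hε0 : 0 < ε := by
    have : (0:ℝ) < u := hu
    positivity
  have hεδ1 : ε < δ1 := by
    have : ε < min (min δ1 δ3) u := half_lt_self (by have : (0:ℝ) < u := hu; positivity)
    exact lt_of_lt_of_le this (le_trans (min_le_left _ _) (min_le_left _ _))
  have hεδ3 : ε < δ3 := by
    have : ε < min (min δ1 δ3) u := half_lt_self (by have : (0:ℝ) < u := hu; positivity)
    exact lt_of_lt_of_le this (le_trans (min_le_left _ _) (min_le_right _ _))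
  have hεu : ε < u := by
    have : ε < min (min δ1 δ3) u := half_lt_self (by have : (0:ℝ) < u := hu; positivity)
    exact lt_of_lt_of_le this (min_le_right _ _)
  -- g is strictly monotone on [0, ε]
  have hmono : StrictMonoOn g (Icc 0 ε) := by
    apply strictMonoOn_of_deriv_pos (convex_Icc 0 ε)
    · apply ContinuousOn.mono (s := Metric.ball (0:ℝ) δ1)
      · exact fun t ht => (hdiff (by simpa [Real.dist_eq] using ht)).continuousAt.continuousWithinAt
      · intro t ht
        simp only [Metric.mem_ball, Real.dist_eq, sub_zero]
        rcases ht with ⟨h1, h2⟩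
        rw [abs_of_nonneg h1]
        exact lt_of_le_of_lt h2 hεδ1
    · intro t ht
      rw [interior_Icc] at ht
      exact hder ⟨ht.1, lt_trans ht.2 hεu⟩
  have : g ε > g 0 := hmono (by constructor <;> norm_num [hε0.le]) (by constructor <;> simp [hε0.le]) hε0
  have : g ε ≤ g 0 := hmax' (by rw [Real.dist_eq, sub_zero, abs_of_pos hε0]; exact hεδ3)
  linarith

variable {E : Type*} [NormedAddCommGroup E] [NormedSpace ℝ E]

/-- Second derivative along a line equals the iterated Fréchet derivative. -/
lemma deriv_deriv_line (f : E → ℝ) (y h : E) (hf : ContDiffAt ℝ 2 f y) :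
    deriv (deriv (fun t : ℝ => f (y + t • h))) 0 = iteratedFDeriv ℝ 2 f y ![h, h] := by
  have hL : ∀ t : ℝ, HasDerivAt (fun s : ℝ => y + s • h) h t := by
    intro t
    simpa using ((hasDerivAt_id t).smul_const h).const_add y
  have hLc : Continuous fun t : ℝ => y + t • h := by continuity
  have hfe : ∀ᶠ z in 𝓝 y, DifferentiableAt ℝ f z := by
    filter_upwards [hf.eventually (by norm_num)] with z hz
    exact hz.differentiableAt two_ne_zero
  have hte : ∀ᶠ t in 𝓝 (0:ℝ), DifferentiableAt ℝ f (y + t • h) := by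
    have := hLc.continuousAt (x := (0:ℝ))
    simp only [ContinuousAt, zero_smul, add_zero] at this
    exact this.eventually hfe
  have hderiv_eq : deriv (fun t : ℝ => f (y + t • h))
      =ᶠ[𝓝 (0:ℝ)] fun t => fderiv ℝ f (y + t • h) h := by
    filter_upwards [hte] with t ht
    exact ((ht.hasFDerivAt.comp_hasDerivAt t (hL t))).deriv
  rw [hderiv_eq.deriv_eq]
  have hdf : DifferentiableAt ℝ (fderiv ℝ f) y :=
    (hf.fderiv_right (m := 1) (by norm_num)).differentiableAt one_ne_zero
  have h1 : HasDerivAt (fun t : ℝ => fderiv ℝ f (y + t • h)) (fderiv ℝ (fderiv ℝ f) y h) 0 := by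
    have hdf' : HasFDerivAt (fderiv ℝ f) (fderiv ℝ (fderiv ℝ f) y) (y + (0:ℝ) • h) := by
      simpa using hdf.hasFDerivAt
    exact hdf'.comp_hasDerivAt 0 (hL 0)
  have h2 : HasDerivAt (fun t : ℝ => (fderiv ℝ f (y + t • h)) h)
      ((fderiv ℝ (fderiv ℝ f) y h) h) 0 := by
    have := h1.clm_apply (hasDerivAt_const (0:ℝ) h)
    simpa using this
  rw [h2.deriv, iteratedFDeriv_two_apply]
  simp

/-- At a local maximum of a C² function, pure second derivatives are nonpositive. -/
lemma iteratedFDeriv_two_nonpos_of_isLocalMax (f : E → ℝ) (y h : E)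
    (hf : ContDiffAt ℝ 2 f y) (hmax : IsLocalMax f y) :
    iteratedFDeriv ℝ 2 f y ![h, h] ≤ 0 := by
  have hL : ∀ t : ℝ, HasDerivAt (fun s : ℝ => y + s • h) h t := by
    intro t
    simpa using ((hasDerivAt_id t).smul_const h).const_add y
  have hLc : Continuous fun t : ℝ => y + t • h := by continuity
  have hLc0 : Filter.Tendsto (fun t : ℝ => y + t • h) (𝓝 0) (𝓝 y) := by
    have := hLc.continuousAt (x := (0:ℝ))
    simpa only [ContinuousAt, zero_smul, add_zero] using this
  have hfe : ∀ᶠ z in 𝓝 y, DifferentiableAt ℝ f z := by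
    filter_upwards [hf.eventually (by norm_num)] with z hz
    exact hz.differentiableAt two_ne_zero
  have hte : ∀ᶠ t in 𝓝 (0:ℝ), DifferentiableAt ℝ f (y + t • h) :=
    hLc0.eventually hfe
  have hderiv_eq : deriv (fun t : ℝ => f (y + t • h))
      =ᶠ[𝓝 (0:ℝ)] fun t => fderiv ℝ f (y + t • h) h := by
    filter_upwards [hte] with t ht
    exact ((ht.hasFDerivAt.comp_hasDerivAt t (hL t))).deriv
  have hdf : DifferentiableAt ℝ (fderiv ℝ f) y :=
    (hf.fderiv_right (m := 1) (by norm_num)).differentiableAt one_ne_zero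
  have h1 : HasDerivAt (fun t : ℝ => fderiv ℝ f (y + t • h)) (fderiv ℝ (fderiv ℝ f) y h) 0 := by
    have hdf' : HasFDerivAt (fderiv ℝ f) (fderiv ℝ (fderiv ℝ f) y) (y + (0:ℝ) • h) := by
      simpa using hdf.hasFDerivAt
    exact hdf'.comp_hasDerivAt 0 (hL 0)
  have h2 : HasDerivAt (fun t : ℝ => (fderiv ℝ f (y + t • h)) h)
      ((fderiv ℝ (fderiv ℝ f) y h) h) 0 := by
    have := h1.clm_apply (hasDerivAt_const (0:ℝ) h)
    simpa using this
  rw [← deriv_deriv_line f y h hf]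
  apply secondDeriv_nonpos_of_isLocalMax
  · filter_upwards [hte] with t ht
    exact ht.comp t (hL t).differentiableAt
  · exact (hderiv_eq.differentiableAt_iff).2 h2.differentiableAt
  · have h3 := hLc0.eventually hmax
    filter_upwards [h3] with t ht
    simpa using ht

lemma iteratedFDeriv_two_add_apply {f g : E → ℝ} {y : E} (h : E)
    (hf : ContDiffAt ℝ 2 f y) (hg : ContDiffAt ℝ 2 g y) :
    iteratedFDeriv ℝ 2 (fun x => f x + g x) y ![h, h]
      = iteratedFDeriv ℝ 2 f y ![h, h] + iteratedFDeriv ℝ 2 g y ![h, h] := by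
  rw [iteratedFDeriv_two_apply, iteratedFDeriv_two_apply, iteratedFDeriv_two_apply]
  have hfe : ∀ᶠ z in 𝓝 y, DifferentiableAt ℝ f z := by
    filter_upwards [hf.eventually (by norm_num)] with z hz
    exact hz.differentiableAt two_ne_zero
  have hge : ∀ᶠ z in 𝓝 y, DifferentiableAt ℝ g z := by
    filter_upwards [hg.eventually (by norm_num)] with z hz
    exact hz.differentiableAt two_ne_zero
  have E1 : fderiv ℝ (fun x => f x + g x) =ᶠ[𝓝 y] fun z => fderiv ℝ f z + fderiv ℝ g z := by
    filter_upwards [hfe, hge] with z hz1 hz2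
    exact fderiv_add hz1 hz2
  rw [E1.fderiv_eq]
  have hdf : DifferentiableAt ℝ (fderiv ℝ f) y :=
    (hf.fderiv_right (m := 1) (by norm_num)).differentiableAt one_ne_zero
  have hdg : DifferentiableAt ℝ (fderiv ℝ g) y :=
    (hg.fderiv_right (m := 1) (by norm_num)).differentiableAt one_ne_zero
  rw [fderiv_fun_add hdf hdg]
  simp

lemma iteratedFDeriv_two_sub_const_mul_apply {f g : E → ℝ} {y : E} (δ : ℝ) (h : E)
    (hf : ContDiffAt ℝ 2 f y) (hg : ContDiffAt ℝ 2 g y) :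
    iteratedFDeriv ℝ 2 (fun x => f x - δ * g x) y ![h, h]
      = iteratedFDeriv ℝ 2 f y ![h, h] - δ * iteratedFDeriv ℝ 2 g y ![h, h] := by
  rw [iteratedFDeriv_two_apply, iteratedFDeriv_two_apply, iteratedFDeriv_two_apply]
  have hfe : ∀ᶠ z in 𝓝 y, DifferentiableAt ℝ f z := by
    filter_upwards [hf.eventually (by norm_num)] with z hz
    exact hz.differentiableAt two_ne_zero
  have hge : ∀ᶠ z in 𝓝 y, DifferentiableAt ℝ g z := by
    filter_upwards [hg.eventually (by norm_num)] with z hz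
    exact hz.differentiableAt two_ne_zero
  have E1 : fderiv ℝ (fun x => f x - δ * g x)
      =ᶠ[𝓝 y] fun z => fderiv ℝ f z - δ • fderiv ℝ g z := by
    filter_upwards [hfe, hge] with z hz1 hz2
    rw [fderiv_fun_sub hz1 (hz2.const_mul δ), fderiv_const_mul hz2 δ]
  rw [E1.fderiv_eq]
  have hdf : DifferentiableAt ℝ (fderiv ℝ f) y :=
    (hf.fderiv_right (m := 1) (by norm_num)).differentiableAt one_ne_zero
  have hdg : DifferentiableAt ℝ (fderiv ℝ g) y :=
    (hg.fderiv_right (m := 1) (by norm_num)).differentiableAt one_ne_zero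
  rw [fderiv_fun_sub (g := fun z => δ • fderiv ℝ g z) hdf (hdg.const_smul δ), fderiv_fun_const_smul hdg δ]
  simp

lemma iteratedFDeriv_two_sum_apply {ι : Type*} {s : Finset ι} {f : ι → E → ℝ} {y : E} (h : E)
    (hf : ∀ i ∈ s, ContDiffAt ℝ 2 (f i) y) :
    iteratedFDeriv ℝ 2 (fun x => ∑ i ∈ s, f i x) y ![h, h]
      = ∑ i ∈ s, iteratedFDeriv ℝ 2 (f i) y ![h, h] := by
  classical
  induction s using Finset.induction with
  | empty =>
    simp only [Finset.sum_empty]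
    rw [show (fun _ : E => (0:ℝ)) = fun _ => (0:ℝ) from rfl]
    simp [iteratedFDeriv_zero_fun]
  | insert a s' hnotmem ih =>
    simp only [Finset.sum_insert hnotmem]
    rw [iteratedFDeriv_two_add_apply h (hf a (Finset.mem_insert_self a s'))
      (ContDiffAt.sum fun i hi => hf i (Finset.mem_insert_of_mem hi)),
      ih (fun i hi => hf i (Finset.mem_insert_of_mem hi))]

lemma deriv_deriv_quad_rpow (s b c : ℝ) (hs : 0 < s) :
    deriv (deriv (fun t : ℝ => (s + 2*b*t + t^2) ^ c)) 0
      = 4*b^2*c*(c-1)*s^(c-2) + 2*c*s^(c-1) := by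
  set Q : ℝ → ℝ := fun t => s + 2*b*t + t^2 with hQ
  have hQd : ∀ t : ℝ, HasDerivAt Q (2*b + 2*t) t := by
    intro t
    have : HasDerivAt (fun t : ℝ => s + 2*b*t + t^2) (0 + 2*b*1 + 2*t) t := by
      exact (((hasDerivAt_const t s).add (((hasDerivAt_id t).const_mul (2*b))))).add
        (by simpa using (hasDerivAt_pow 2 t))
    simpa using this
  have hQ0 : Q 0 = s := by simp [hQ]
  have hQne : ∀ᶠ t in 𝓝 (0:ℝ), Q t ≠ 0 := by
    have hc : ContinuousAt Q 0 := (hQd 0).continuousAt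
    have := hc.eventually_ne (by rw [hQ0]; exact hs.ne')
    exact this
  have hderiv_eq : deriv (fun t => Q t ^ c)
      =ᶠ[𝓝 (0:ℝ)] fun t => (2*b + 2*t) * c * Q t ^ (c-1) := by
    filter_upwards [hQne] with t ht
    exact ((hQd t).rpow_const (Or.inl ht)).deriv
  rw [hderiv_eq.deriv_eq]
  have h1 : HasDerivAt (fun t => Q t ^ (c-1)) ((2*b + 2*0) * (c-1) * s^(c-1-1)) 0 := by
    have := (hQd 0).rpow_const (p := c-1) (Or.inl (by rw [hQ0]; exact hs.ne'))
    rwa [hQ0] at this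
  have h2 : HasDerivAt (fun t : ℝ => 2*b + 2*t) 2 0 := by
    simpa using ((hasDerivAt_id (0:ℝ)).const_mul 2).const_add (2*b)
  have h2' : HasDerivAt (fun t : ℝ => (2*b + 2*t) * c) (2 * c) 0 := by
    simpa using h2.mul_const c
  have h3 : HasDerivAt (fun t => (2*b + 2*t) * c * Q t ^ (c-1)) _ 0 := h2'.mul h1
  rw [h3.deriv, hQ0, show c - 1 - 1 = c - 2 by ring]
  ring

lemma contDiffAt_radial {n : ℕ} (c : ℝ) (q x : EuclideanSpace ℝ (Fin n)) (hx : x ≠ q) :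
    ContDiffAt ℝ 2 (fun z : EuclideanSpace ℝ (Fin n) => (‖z - q‖^2 : ℝ) ^ c) x := by
  have h1 : ContDiffAt ℝ 2 (fun z : EuclideanSpace ℝ (Fin n) => (‖z - q‖^2 : ℝ)) x := by
    have : ContDiff ℝ 2 (fun z : EuclideanSpace ℝ (Fin n) => (‖z - q‖^2 : ℝ)) := by
      have hc : ContDiff ℝ 2 (fun z : EuclideanSpace ℝ (Fin n) => z - q) :=
        contDiff_id.sub contDiff_const
      exact (contDiff_norm_sq ℝ (E := EuclideanSpace ℝ (Fin n))).comp hc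
    exact this.contDiffAt
  have h2 : ContDiffAt ℝ 2 (fun s : ℝ => s ^ c) (‖x - q‖^2) :=
    Real.contDiffAt_rpow_const_of_ne (ne_of_gt (pow_pos (norm_pos_iff.2 (sub_ne_zero.2 hx)) 2))
  exact h2.comp x h1

lemma lap_radial {n : ℕ} (c : ℝ) (q x : EuclideanSpace ℝ (Fin n)) (hx : x ≠ q) :
    ∑ j : Fin n, iteratedFDeriv ℝ 2 (fun z => (‖z - q‖^2 : ℝ) ^ c) x
        ![EuclideanSpace.single j 1, EuclideanSpace.single j 1]
      = (4*c*(c-1) + 2*c*n) * (‖x - q‖^2 : ℝ) ^ (c-1) := by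
  have hs : (0:ℝ) < ‖x - q‖^2 := pow_pos (norm_pos_iff.2 (sub_ne_zero.2 hx)) 2
  set s : ℝ := ‖x - q‖^2 with hsdef
  have hterm : ∀ j : Fin n,
      iteratedFDeriv ℝ 2 (fun z => (‖z - q‖^2 : ℝ) ^ c) x
        ![EuclideanSpace.single j 1, EuclideanSpace.single j 1]
      = 4*((x-q) j)^2*c*(c-1)*s^(c-2) + 2*c*s^(c-1) := by
    intro j
    set e : EuclideanSpace ℝ (Fin n) := EuclideanSpace.single j 1 with hedef
    rw [← deriv_deriv_line _ x e (contDiffAt_radial c q x hx)]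
    have hline : (fun t : ℝ => (‖x + t • e - q‖^2 : ℝ) ^ c)
        = fun t : ℝ => (s + 2*((x-q) j)*t + t^2) ^ c := by
      funext t
      congr 1
      have h1 : x + t • e - q = (x - q) + t • e := by abel
      rw [h1, norm_add_sq_real]
      have h2 : (inner ℝ (x - q) (t • e) : ℝ) = t * ((x - q) j) := by
        rw [real_inner_smul_right]
        congr 1
        rw [hedef]
        simp [EuclideanSpace.inner_single_right]
      have h3 : ‖t • e‖^2 = t^2 := by
        rw [norm_smul, hedef, EuclideanSpace.norm_single]
        simp [mul_pow, sq_abs]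
      rw [h2, h3]
      ring
    rw [hline]
    exact deriv_deriv_quad_rpow s ((x-q) j) c hs
  rw [Finset.sum_congr rfl (fun j _ => hterm j)]
  rw [Finset.sum_add_distrib, Finset.sum_const]
  have hsum : ∑ j : Fin n, 4*((x-q) j)^2*c*(c-1)*s^(c-2) = 4*c*(c-1)*s^(c-2) * s := by
    rw [← Finset.sum_mul, ← Finset.sum_mul, ← Finset.sum_mul]
    have : ∑ j : Fin n, 4*((x-q) j)^2 = 4 * s := by
      rw [← Finset.mul_sum, hsdef]
      congr 1
      rw [← real_inner_self_eq_norm_sq]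
      rw [PiLp.inner_apply]
      refine Finset.sum_congr rfl fun j _ => ?_
      simp only [RCLike.inner_apply, conj_trivial]
      ring
    rw [this]
    ring
  rw [hsum]
  have : s^(c-2) * s = s^(c-1) := by
    rw [show c - 1 = (c-2) + 1 by ring, Real.rpow_add_one hs.ne']
  rw [mul_assoc (4*c*(c-1)), this]
  simp only [Finset.card_univ, Fintype.card_fin, nsmul_eq_mul]
  ring

set_option maxHeartbeats 1600000

/-- One-sided maximum principle: under the hypotheses, `u ≤ 0` off the singular set. -/
lemma key_nonpos (n : ℕ) (hn : 3 ≤ n) (m : ℕ) (p : Fin m → EuclideanSpace ℝ (Fin n))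
    (u : EuclideanSpace ℝ (Fin n) → ℝ)
    (hC2 : ContDiffOn ℝ 2 u (Set.range p)ᶜ)
    (hΔ : ∀ x ∉ Set.range p, ∑ j : Fin n, iteratedFDeriv ℝ 2 u x
      ![EuclideanSpace.single j 1, EuclideanSpace.single j 1] = 0)
    (s₀ : ℝ) (hs₀ : 0 < s₀) (C : ℝ) (hC : 0 < C)
    (μ : ℝ) (hμ : μ ∈ Set.Ioo (0 : ℝ) ((n : ℝ) - 2))
    (hbound : ∀ i : Fin m, ∀ x, x ∉ Set.range p → dist x (p i) < s₀ →
      u x ≤ C * (dist x (p i)) ^ (-μ))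
    (hdecay : ∀ ε : ℝ, 0 < ε → ∃ R : ℝ, ∀ x, x ∉ Set.range p →
      (∀ i : Fin m, R ≤ dist x (p i)) → u x ≤ ε) :
    ∀ x, x ∉ Set.range p → u x ≤ 0 := by
  intro x₀ hx₀
  by_contra hpos
  push_neg at hpos
  set a : ℝ := u x₀ with ha_def
  clear_value a
  have ha : 0 < a := hpos
  -- trivial case m = 0
  rcases Nat.eq_zero_or_pos m with hm0 | hm
  · subst hm0
    obtain ⟨R, hR⟩ := hdecay (a/2) (by linarith)
    have := hR x₀ hx₀ (fun i => i.elim0)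
    linarith
  haveI : Nonempty (Fin m) := ⟨⟨0, hm⟩⟩
  have hΩopen : IsOpen (Set.range p)ᶜ := (Set.finite_range p).isClosed.isOpen_compl
  -- exponents
  obtain ⟨hμ0, hμn⟩ := hμ
  have hn3 : (3:ℝ) ≤ (n:ℝ) := by exact_mod_cast hn
  set ν : ℝ := (μ + ((n:ℝ) - 2)) / 2 with hν_def
  have hν0 : 0 < ν := by rw [hν_def]; linarith
  have hμν : μ < ν := by rw [hν_def]; linarith
  have hνn : ν < (n:ℝ) - 2 := by rw [hν_def]; linarith
  set c : ℝ := -ν/2 with hc_def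
  -- the comparison function
  set v : EuclideanSpace ℝ (Fin n) → ℝ := fun x => ∑ i : Fin m, (‖x - p i‖^2 : ℝ) ^ c
    with hv_def
  clear_value v
  have hv_nonneg : ∀ x, 0 ≤ v x := by
    intro x
    rw [hv_def]
    exact Finset.sum_nonneg fun i _ => Real.rpow_nonneg (by positivity) _
  -- each term equals dist ^ (-ν) away from the singularity
  have hv_term : ∀ (q x : EuclideanSpace ℝ (Fin n)), x ≠ q →
      (‖x - q‖^2 : ℝ) ^ c = dist x q ^ (-ν) := by
    intro q x hx
    rw [dist_eq_norm]
    rw [← Real.rpow_natCast (‖x - q‖) 2, ← Real.rpow_mul (norm_nonneg _)]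
    norm_num
    rw [hc_def]
    ring_nf
  have hv_ContDiffAt : ∀ x, x ∉ Set.range p → ContDiffAt ℝ 2 v x := by
    intro x hx
    rw [hv_def]
    exact ContDiffAt.sum fun i _ => contDiffAt_radial c (p i) x
      (fun h => hx ⟨i, h ▸ rfl⟩)
  -- choice of δ
  set δ : ℝ := a / (2 * (v x₀ + 1)) with hδ_def
  clear_value δ
  have hvx₀ : 0 ≤ v x₀ := hv_nonneg x₀
  have hδ0 : 0 < δ := by
    rw [hδ_def]
    exact div_pos ha (by linarith)
  set w : EuclideanSpace ℝ (Fin n) → ℝ := fun x => u x - δ * v x with hw_def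
  clear_value w
  have hwx₀ : a/2 ≤ w x₀ := by
    have h1 : δ * v x₀ ≤ δ * (v x₀ + 1) := by nlinarith
    have h2 : δ * (v x₀ + 1) = a/2 := by
      rw [hδ_def]; field_simp
    simp only [hw_def]
    rw [← ha_def]
    linarith
  -- decay radius
  obtain ⟨R₀, hR₀⟩ := hdecay (a/4) (by linarith)
  set R : ℝ := max R₀ 0 with hR_def
  have hR_nonneg : 0 ≤ R := le_max_right _ _
  have hRdecay : ∀ x, x ∉ Set.range p → (∀ i, R ≤ dist x (p i)) → u x ≤ a/4 :=
    fun x hx h => hR₀ x hx fun i => le_trans (le_max_left _ _) (h i)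
  -- geometry of the singular points
  set i0 : Fin m := ⟨0, hm⟩ with hi0_def
  set B : ℝ := Finset.univ.sup' ⟨i0, Finset.mem_univ _⟩ (fun i => dist (p i) (p i0)) with hB_def
  have hB_nonneg : 0 ≤ B := le_trans dist_nonneg
    (Finset.le_sup' (f := fun i => dist (p i) (p i0)) (Finset.mem_univ i0))
  have hB : ∀ i, dist (p i) (p i0) ≤ B :=
    fun i => Finset.le_sup' (f := fun i => dist (p i) (p i0)) (Finset.mem_univ i)
  set M : ℝ := dist x₀ (p i0) with hM_def
  have hM_nonneg : 0 ≤ M := dist_nonneg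
  set R' : ℝ := R + 2*B + M + 1 with hR'_def
  have hx₀far : ∀ i, dist x₀ (p i) < R' := by
    intro i
    calc dist x₀ (p i) ≤ dist x₀ (p i0) + dist (p i0) (p i) := dist_triangle _ _ _
      _ = M + dist (p i) (p i0) := by rw [dist_comm (p i0)]
      _ ≤ M + B := by linarith [hB i]
      _ < R' := by rw [hR'_def]; linarith
  -- choice of ρ
  set dmin : ℝ := Finset.univ.inf' ⟨i0, Finset.mem_univ _⟩ (fun i => dist x₀ (p i))
    with hdmin_def
  have hdmin_le : ∀ i, dmin ≤ dist x₀ (p i) :=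
    fun i => Finset.inf'_le _ (Finset.mem_univ i)
  have hdmin0 : 0 < dmin := by
    rw [hdmin_def]
    apply (Finset.lt_inf'_iff _).2
    intro i _
    exact dist_pos.2 fun h => hx₀ ⟨i, (h ▸ rfl : p i = x₀)⟩
  have hνμ0 : 0 < ν - μ := by linarith
  set Epow : ℝ := (δ/(2*C)) ^ (ν - μ)⁻¹ with hE_def
  clear_value Epow
  have hEpos : 0 < Epow := by
    rw [hE_def]; exact Real.rpow_pos_of_pos (div_pos hδ0 (by linarith)) _
  set ρ : ℝ := min (min (s₀/2) (dmin/2)) Epow with hρ_def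
  clear_value ρ
  have hρ0 : 0 < ρ := by
    rw [hρ_def]
    exact lt_min (lt_min (half_pos hs₀) (half_pos hdmin0)) hEpos
  have hρs₀ : ρ < s₀ := by
    rw [hρ_def]
    exact lt_of_le_of_lt (le_trans (min_le_left _ _) (min_le_left _ _)) (by linarith)
  have hρdmin : ρ < dmin := by
    rw [hρ_def]
    exact lt_of_le_of_lt (le_trans (min_le_left _ _) (min_le_right _ _)) (by linarith)
  have hρkey : C * ρ ^ (ν - μ) ≤ δ / 2 := by
    have hρE : ρ ≤ Epow := by rw [hρ_def]; exact min_le_right _ _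
    have h1 : ρ ^ (ν - μ) ≤ Epow ^ (ν - μ) :=
      Real.rpow_le_rpow hρ0.le hρE hνμ0.le
    have h2 : Epow ^ (ν - μ) = δ/(2*C) := by
      rw [hE_def]
      exact Real.rpow_inv_rpow (div_pos hδ0 (by linarith)).le hνμ0.ne'
    rw [h2] at h1
    calc C * ρ ^ (ν - μ) ≤ C * (δ/(2*C)) := by nlinarith [Real.rpow_nonneg hρ0.le (ν - μ)]
      _ = δ/2 := by field_simp
  -- the compact region
  set K : Set (EuclideanSpace ℝ (Fin n)) :=
    {x | ∀ i, ρ ≤ dist x (p i) ∧ dist x (p i) ≤ R'} with hK_def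
  have hKΩ : K ⊆ (Set.range p)ᶜ := by
    intro x hx
    simp only [Set.mem_compl_iff, Set.mem_range]
    rintro ⟨i, rfl⟩
    have := (hx i).1
    rw [dist_self] at this
    linarith
  have hKclosed : IsClosed K := by
    have : K = ⋂ i, {x | ρ ≤ dist x (p i)} ∩ {x | dist x (p i) ≤ R'} := by
      ext x; simp [hK_def, Set.mem_iInter, forall_and]
    rw [this]
    exact isClosed_iInter fun i =>
      ((isClosed_le continuous_const (continuous_id.dist continuous_const)).inter
        (isClosed_le (continuous_id.dist continuous_const) continuous_const))
  have hKcompact : IsCompact K := by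
    apply (isCompact_closedBall (p i0) R').of_isClosed_subset hKclosed
    intro x hx
    simpa [Metric.mem_closedBall] using (hx i0).2
  have hx₀K : x₀ ∈ K := by
    intro i
    exact ⟨le_trans hρdmin.le (hdmin_le i), (hx₀far i).le⟩
  -- continuity of w on K
  have hwcont : ContinuousOn w K := by
    rw [hw_def]
    apply ContinuousOn.sub (hC2.continuousOn.mono hKΩ)
    apply ContinuousOn.mul continuousOn_const
    intro x hx
    exact ((hv_ContDiffAt x (hKΩ hx)).continuousAt).continuousWithinAt
  -- maximum over K
  obtain ⟨y, hyK, hymax⟩ := hKcompact.exists_isMaxOn ⟨x₀, hx₀K⟩ hwcont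
  have hyΩ : y ∉ Set.range p := hKΩ hyK
  have hwy : a/2 ≤ w y := le_trans hwx₀ (hymax hx₀K)
  -- y is in the open interior region
  have hy_in : ∀ i, ρ < dist y (p i) ∧ dist y (p i) < R' := by
    intro i
    constructor
    · rcases lt_or_eq_of_le (hyK i).1 with h | h
      · exact h
      · -- dist y (p i) = ρ : contradiction since then w y ≤ 0
        exfalso
        have hr : dist y (p i) = ρ := h.symm
        have hub : u y ≤ C * ρ ^ (-μ) := by
          have := hbound i y hyΩ (by rw [hr]; exact hρs₀)
          rwa [hr] at this
        have hvlb : ρ ^ (-ν) ≤ v y := by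
          rw [hv_def]
          have h1 : (‖y - p i‖^2 : ℝ) ^ c = ρ ^ (-ν) := by
            rw [hv_term (p i) y (fun hh => hyΩ ⟨i, hh ▸ rfl⟩), hr]
          calc ρ ^ (-ν) = (‖y - p i‖^2 : ℝ) ^ c := h1.symm
            _ ≤ ∑ i' : Fin m, (‖y - p i'‖^2 : ℝ) ^ c :=
              Finset.single_le_sum (f := fun i' => (‖y - p i'‖^2 : ℝ) ^ c)
                (fun i' _ => Real.rpow_nonneg (by positivity) _) (Finset.mem_univ i)
        have hkey2 : C * ρ ^ (-μ) ≤ (δ/2) * ρ ^ (-ν) := by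
          have e1 : ρ ^ (-ν) = ρ ^ (ν - μ) * ρ ^ (-ν) * ρ ^ (μ - ν) * ρ ^ (ν - μ) *
              ρ ^ (μ - ν) := by
            rw [← Real.rpow_add hρ0, ← Real.rpow_add hρ0, ← Real.rpow_add hρ0,
              ← Real.rpow_add hρ0]
            ring_nf
          have e2 : ρ ^ (-μ) = ρ ^ (ν - μ) * ρ ^ (-ν) := by
            rw [← Real.rpow_add hρ0]; ring_nf
          rw [e2, ← mul_assoc]
          apply mul_le_mul_of_nonneg_right _ (Real.rpow_nonneg hρ0.le _)
          exact le_trans hρkey (by linarith [Real.rpow_nonneg hρ0.le (ν - μ)])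
        have : w y ≤ 0 := by
          simp only [hw_def]
          have h3 : δ * (ρ ^ (-ν)) ≤ δ * v y := by
            apply mul_le_mul_of_nonneg_left hvlb hδ0.le
          have h4 : (δ/2) * ρ ^ (-ν) ≤ δ * ρ ^ (-ν) := by
            have := Real.rpow_nonneg hρ0.le (-ν)
            nlinarith
          linarith
        linarith
    · rcases lt_or_eq_of_le (hyK i).2 with h | h
      · exact h
      · -- dist y (p i) = R' : contradiction since then u y ≤ a/4
        exfalso
        have hfar : ∀ i', R ≤ dist y (p i') := by
          intro i'
          have h1 : dist y (p i) ≤ dist y (p i') + dist (p i') (p i) := dist_triangle _ _ _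
          have h2 : dist (p i') (p i) ≤ dist (p i') (p i0) + dist (p i0) (p i) :=
            dist_triangle _ _ _
          have h3 : dist (p i') (p i0) ≤ B := hB i'
          have h4 : dist (p i0) (p i) ≤ B := by rw [dist_comm]; exact hB i
          have h5 : dist y (p i) = R' := h
          rw [hR'_def] at h5
          linarith
        have h6 : u y ≤ a/4 := hRdecay y hyΩ hfar
        have h7 : 0 ≤ δ * v y := mul_nonneg hδ0.le (hv_nonneg y)
        have : w y ≤ a/4 := by simp only [hw_def]; linarith
        linarith
  -- y is a local max of w
  have hU_open : IsOpen {x : EuclideanSpace ℝ (Fin n) |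
      ∀ i, ρ < dist x (p i) ∧ dist x (p i) < R'} := by
    have : {x : EuclideanSpace ℝ (Fin n) | ∀ i, ρ < dist x (p i) ∧ dist x (p i) < R'}
        = ⋂ i, ({x | ρ < dist x (p i)} ∩ {x | dist x (p i) < R'}) := by
      ext x; simp [Set.mem_iInter, forall_and]
    rw [this]
    exact isOpen_iInter_of_finite fun i =>
      ((isOpen_lt continuous_const (continuous_id.dist continuous_const)).inter
        (isOpen_lt (continuous_id.dist continuous_const) continuous_const))
  have hUK : {x : EuclideanSpace ℝ (Fin n) | ∀ i, ρ < dist x (p i) ∧ dist x (p i) < R'} ⊆ K :=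
    fun x hx i => ⟨(hx i).1.le, (hx i).2.le⟩
  have hlocmax : IsLocalMax w y := by
    filter_upwards [hU_open.mem_nhds hy_in] with z hz
    exact hymax (hUK hz)
  -- C² of w at y
  have huC2y : ContDiffAt ℝ 2 u y := hC2.contDiffAt (hΩopen.mem_nhds hyΩ)
  have hvC2y : ContDiffAt ℝ 2 v y := hv_ContDiffAt y hyΩ
  have hwC2y : ContDiffAt ℝ 2 w y := by
    rw [hw_def]
    exact huC2y.sub (contDiffAt_const.mul hvC2y)
  -- second derivative inequality
  have hmain : ∀ j : Fin n, iteratedFDeriv ℝ 2 w y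
      ![EuclideanSpace.single j 1, EuclideanSpace.single j 1] ≤ 0 :=
    fun j => iteratedFDeriv_two_nonpos_of_isLocalMax w y _ hwC2y hlocmax
  -- Laplacian computation
  have hsplit : ∀ j : Fin n, iteratedFDeriv ℝ 2 w y
        ![EuclideanSpace.single j 1, EuclideanSpace.single j 1]
      = iteratedFDeriv ℝ 2 u y ![EuclideanSpace.single j 1, EuclideanSpace.single j 1]
        - δ * iteratedFDeriv ℝ 2 v y
          ![EuclideanSpace.single j 1, EuclideanSpace.single j 1] := by
    intro j
    rw [hw_def]
    exact iteratedFDeriv_two_sub_const_mul_apply δ _ huC2y hvC2y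
  have hlapv : ∑ j : Fin n, iteratedFDeriv ℝ 2 v y
        ![EuclideanSpace.single j 1, EuclideanSpace.single j 1]
      = (4*c*(c-1) + 2*c*n) * ∑ i : Fin m, (‖y - p i‖^2 : ℝ) ^ (c - 1) := by
    have hterm : ∀ j : Fin n, iteratedFDeriv ℝ 2 v y
          ![EuclideanSpace.single j 1, EuclideanSpace.single j 1]
        = ∑ i : Fin m, iteratedFDeriv ℝ 2 (fun z => (‖z - p i‖^2 : ℝ) ^ c) y
          ![EuclideanSpace.single j 1, EuclideanSpace.single j 1] := by
      intro j
      rw [hv_def]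
      exact iteratedFDeriv_two_sum_apply _
        (fun i _ => contDiffAt_radial c (p i) y (fun h => hyΩ ⟨i, h ▸ rfl⟩))
    rw [Finset.sum_congr rfl fun j _ => hterm j, Finset.sum_comm, Finset.mul_sum]
    exact Finset.sum_congr rfl fun i _ =>
      lap_radial c (p i) y (fun h => hyΩ ⟨i, h ▸ rfl⟩)
  -- conclude
  have hlapw : ∑ j : Fin n, iteratedFDeriv ℝ 2 w y
        ![EuclideanSpace.single j 1, EuclideanSpace.single j 1]
      = - δ * ((4*c*(c-1) + 2*c*n) * ∑ i : Fin m, (‖y - p i‖^2 : ℝ) ^ (c - 1)) := by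
    rw [Finset.sum_congr rfl fun j _ => hsplit j, Finset.sum_sub_distrib,
      hΔ y hyΩ, ← Finset.mul_sum, hlapv]
    ring
  have hκ : 4*c*(c-1) + 2*c*n = ν * (ν + 2 - n) := by rw [hc_def]; ring
  have hκneg : 4*c*(c-1) + 2*c*n < 0 := by
    rw [hκ]
    apply mul_neg_of_pos_of_neg hν0
    linarith
  have hT : 0 < ∑ i : Fin m, (‖y - p i‖^2 : ℝ) ^ (c - 1) := by
    apply Finset.sum_pos _ ⟨i0, Finset.mem_univ _⟩
    intro i _
    apply Real.rpow_pos_of_pos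
    have : y ≠ p i := fun h => hyΩ ⟨i, h ▸ rfl⟩
    exact pow_pos (norm_pos_iff.2 (sub_ne_zero.2 this)) 2
  have hsum_nonpos : ∑ j : Fin n, iteratedFDeriv ℝ 2 w y
      ![EuclideanSpace.single j 1, EuclideanSpace.single j 1] ≤ 0 :=
    Finset.sum_nonpos fun j _ => hmain j
  rw [hlapw] at hsum_nonpos
  nlinarith [mul_pos hδ0 (mul_pos (neg_pos.2 hκneg) hT)]



/-- A real-valued function is harmonic on a set `s ⊆ ℝⁿ` if it is C² there and the sum of
its pure second partial derivatives (computed within `s`) vanishes at every point of `s`. -/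
def IsHarmonicOnEuc {n : ℕ} (u : EuclideanSpace ℝ (Fin n) → ℝ)
    (s : Set (EuclideanSpace ℝ (Fin n))) : Prop :=
  ContDiffOn ℝ 2 u s ∧
    ∀ x ∈ s, ∑ i : Fin n, iteratedFDerivWithin ℝ 2 u s x
      ![EuclideanSpace.single i 1, EuclideanSpace.single i 1] = 0

/-- **Liouville with finitely many singular points.** Let n ≥ 3 and
S = {p₁,…,p_m} ⊂ ℝⁿ finite. If u is harmonic on ℝⁿ ∖ S, satisfies near each pᵢ the bound
|u(x)| ≤ C·|x − pᵢ|^{−μ} with 0 < μ < n − 2, and u(x) → 0 as the distance from x to S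
tends to infinity, then u ≡ 0 on ℝⁿ ∖ S. -/
theorem stmt_8 (n : ℕ) (hn : 3 ≤ n) (m : ℕ) (p : Fin m → EuclideanSpace ℝ (Fin n))
    (u : EuclideanSpace ℝ (Fin n) → ℝ)
    (hu : IsHarmonicOnEuc u (Set.range p)ᶜ)
    (s₀ : ℝ) (hs₀ : 0 < s₀) (C : ℝ) (hC : 0 < C)
    (μ : ℝ) (hμ : μ ∈ Set.Ioo (0 : ℝ) ((n : ℝ) - 2))
    (hbound : ∀ i : Fin m, ∀ x, x ∉ Set.range p → dist x (p i) < s₀ →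
      |u x| ≤ C * (dist x (p i)) ^ (-μ))
    (hdecay : ∀ ε : ℝ, 0 < ε → ∃ R : ℝ, ∀ x, x ∉ Set.range p →
      (∀ i : Fin m, R ≤ dist x (p i)) → |u x| ≤ ε) :
    ∀ x, x ∉ Set.range p → u x = 0 := by
  -- proof body
  have hΩopen : IsOpen (Set.range p)ᶜ := (Set.finite_range p).isClosed.isOpen_compl
  obtain ⟨hC2, hΔ₀⟩ := hu
  have hΔ : ∀ x, x ∉ Set.range p → ∑ j : Fin n, iteratedFDeriv ℝ 2 u x
      ![EuclideanSpace.single j 1, EuclideanSpace.single j 1] = 0 := by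
    intro x hx
    have heq := iteratedFDerivWithin_of_isOpen (𝕜 := ℝ) (f := u) 2 hΩopen hx
    have := hΔ₀ x hx
    rw [heq] at this
    exact this
  have h1 := key_nonpos n hn m p u hC2 hΔ s₀ hs₀ C hC μ hμ
    (fun i x hx hd => le_trans (le_abs_self _) (hbound i x hx hd))
    (fun ε hε => (hdecay ε hε).imp fun R hR x hx h => le_trans (le_abs_self _) (hR x hx h))
  have hΔneg : ∀ x, x ∉ Set.range p → ∑ j : Fin n, iteratedFDeriv ℝ 2 (fun z => -u z) x
      ![EuclideanSpace.single j 1, EuclideanSpace.single j 1] = 0 := by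
    intro x hx
    have heach : ∀ j : Fin n, iteratedFDeriv ℝ 2 (fun z => -u z) x
        ![EuclideanSpace.single j 1, EuclideanSpace.single j 1]
        = -(iteratedFDeriv ℝ 2 u x
          ![EuclideanSpace.single j 1, EuclideanSpace.single j 1]) := by
      intro j
      have : (fun z => -u z) = -u := rfl
      rw [this, iteratedFDeriv_neg_apply]
      simp
    rw [Finset.sum_congr rfl fun j _ => heach j, Finset.sum_neg_distrib, hΔ x hx, neg_zero]
  have h2 := key_nonpos n hn m p (fun z => -u z) (hC2.neg) hΔneg s₀ hs₀ C hC μ hμ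
    (fun i x hx hd => le_trans (le_abs_self _) (by rw [abs_neg]; exact hbound i x hx hd))
    (fun ε hε => (hdecay ε hε).imp fun R hR x hx h =>
      le_trans (le_abs_self _) (by rw [abs_neg]; exact hR x hx h))
  intro x hx
  have ha := h1 x hx
  have hb : -u x ≤ 0 := h2 x hx
  linarith
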